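/- Let S and A be nonempty finite sets and let 𝒫 ⊆ Δ(S)^{S×A} be a convex and compact uncertainty set that is weakly s-tractable. Then for every next-state-independent r ∈ ℝ^{S×A×S}, every γ ∈ [0,1) and every μ ∈ Δ(S), there exists a stationary optimal policy: the supremum over all history-dependent policies π ∈ Π_H of inf_{P∈𝒫} ∑_s μ_s v^{π,P}_s equals the maximum over stationary policies π ∈ Δ(A)^S of min_{P∈𝒫} ∑_s μ_s v^{π,P}_s; moreover there exists a stationary policy π* that attains this common value simultaneously for every μ ∈ Δ(S). -/

import Mathlib

open scoped BigOperators

namespace RMDP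

variable {S A : Type*} [Fintype S] [Fintype A]

def IsKernel (P : S → A → S → ℝ) : Prop := ∀ s a, P s a ∈ stdSimplex ℝ S

def IsPolicy (π : S → A → ℝ) : Prop := ∀ s, π s ∈ stdSimplex ℝ A

def NextStateIndep (r : S → A → S → ℝ) : Prop :=
  ∀ (s : S) (a : A) (s' s'' : S), r s a s' = r s a s''

noncomputable def minOver {K : Type*} (K0 : Set K) (f : K → ℝ) : ℝ := sInf (f '' K0)

noncomputable def maxOver {K : Type*} (K0 : Set K) (f : K → ℝ) : ℝ := sSup (f '' K0)

noncomputable def TpiP (π : S → A → ℝ) (r : S → A → S → ℝ) (γ : ℝ)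
    (P : S → A → S → ℝ) (v : S → ℝ) : S → ℝ :=
  fun s => ∑ a, π s a * ∑ s', P s a s' * (r s a s' + γ * v s')

noncomputable def Tpi (US : Set (S → A → S → ℝ)) (π : S → A → ℝ)
    (r : S → A → S → ℝ) (γ : ℝ) (v : S → ℝ) : S → ℝ :=
  fun s => minOver US (fun P => ∑ a, π s a * ∑ s', P s a s' * (r s a s' + γ * v s'))

noncomputable def TpiHat (US : Set (S → A → S → ℝ)) (π : S → A → ℝ)
    (r : S → A → S → ℝ) (γ : ℝ) (v : S → ℝ) : S → ℝ :=
  fun s => ∑ a, π s a * minOver US (fun P => ∑ s', P s a s' * (r s a s' + γ * v s'))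

noncomputable def Topt (US : Set (S → A → S → ℝ)) (r : S → A → S → ℝ) (γ : ℝ)
    (v : S → ℝ) : S → ℝ :=
  fun s => maxOver (stdSimplex ℝ A)
    (fun p => minOver US (fun P => ∑ a, p a * ∑ s', P s a s' * (r s a s' + γ * v s')))

def IsHPolicy (π : List (S × A) → S → A → ℝ) : Prop := ∀ h s, π h s ∈ stdSimplex ℝ A

noncomputable def expRHH (π : List (S × A) → S → A → ℝ)
    (Q : List (S × A) → S → A → S → ℝ) (r : S → A → S → ℝ) :
    ℕ → List (S × A) → S → ℝ
  | 0, h, s => ∑ a, π h s a * ∑ s', Q (h ++ [(s, a)]) s a s' * r s a s'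
  | (t + 1), h, s =>
      ∑ a, π h s a * ∑ s', Q (h ++ [(s, a)]) s a s' * expRHH π Q r t (h ++ [(s, a)]) s'

noncomputable def vHH (π : List (S × A) → S → A → ℝ)
    (Q : List (S × A) → S → A → S → ℝ) (r : S → A → S → ℝ) (γ : ℝ) (s : S) : ℝ :=
  ∑' t : ℕ, γ ^ t * expRHH π Q r t [] s

def STractable (US : Set (S → A → S → ℝ)) : Prop :=
  ∀ π : S → A → ℝ, IsPolicy π →
    ∀ (r : S → A → S → ℝ) (γ : ℝ), 0 ≤ γ → γ < 1 →
      ∀ v : (S → A → S → ℝ) → S → ℝ, (∀ P ∈ US, TpiP π r γ P (v P) = v P) →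
        ∀ u : S → ℝ, Tpi US π r γ u = u →
          ∀ μ ∈ stdSimplex ℝ S,
            minOver US (fun P => ∑ s, μ s * v P s) = ∑ s, μ s * u s

def SATractable (US : Set (S → A → S → ℝ)) : Prop :=
  ∀ π : S → A → ℝ, IsPolicy π →
    ∀ (r : S → A → S → ℝ) (γ : ℝ), 0 ≤ γ → γ < 1 →
      ∀ v : (S → A → S → ℝ) → S → ℝ, (∀ P ∈ US, TpiP π r γ P (v P) = v P) →
        ∀ uhat : S → ℝ, TpiHat US π r γ uhat = uhat →
          ∀ μ ∈ stdSimplex ℝ S,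
            minOver US (fun P => ∑ s, μ s * v P s) = ∑ s, μ s * uhat s

def WeakSTractable (US : Set (S → A → S → ℝ)) : Prop :=
  ∀ π : S → A → ℝ, IsPolicy π →
    ∀ (r : S → A → S → ℝ), NextStateIndep r → ∀ γ : ℝ, 0 ≤ γ → γ < 1 →
      ∀ v : (S → A → S → ℝ) → S → ℝ, (∀ P ∈ US, TpiP π r γ P (v P) = v P) →
        ∀ u : S → ℝ, Tpi US π r γ u = u →
          ∀ μ ∈ stdSimplex ℝ S,
            minOver US (fun P => ∑ s, μ s * v P s) = ∑ s, μ s * u s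

def WeakSATractable (US : Set (S → A → S → ℝ)) : Prop :=
  ∀ π : S → A → ℝ, IsPolicy π →
    ∀ (r : S → A → S → ℝ), NextStateIndep r → ∀ γ : ℝ, 0 ≤ γ → γ < 1 →
      ∀ v : (S → A → S → ℝ) → S → ℝ, (∀ P ∈ US, TpiP π r γ P (v P) = v P) →
        ∀ uhat : S → ℝ, TpiHat US π r γ uhat = uhat →
          ∀ μ ∈ stdSimplex ℝ S,
            minOver US (fun P => ∑ s, μ s * v P s) = ∑ s, μ s * uhat s

def SSPs (US : Set (S → A → S → ℝ)) : Prop :=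
  ∀ V : S → A → S → ℝ, ∃ Pstar ∈ US, ∀ s : S, ∀ P ∈ US,
    (∑ a, ∑ s', Pstar s a s' * V s a s') ≤ ∑ a, ∑ s', P s a s' * V s a s'

def SSPsa (US : Set (S → A → S → ℝ)) : Prop :=
  ∀ V : S → A → S → ℝ, ∃ Pstar ∈ US, ∀ (s : S) (a : A), ∀ P ∈ US,
    (∑ s', Pstar s a s' * V s a s') ≤ ∑ s', P s a s' * V s a s'

def WeakSSPs (US : Set (S → A → S → ℝ)) : Prop :=
  ∀ π : S → A → ℝ, IsPolicy π → ∀ V : S → ℝ, ∃ Pstar ∈ US, ∀ s : S, ∀ P ∈ US,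
    (∑ a, π s a * ∑ s', Pstar s a s' * V s') ≤ ∑ a, π s a * ∑ s', P s a s' * V s'

def WeakSSPsa (US : Set (S → A → S → ℝ)) : Prop :=
  ∀ V : S → ℝ, ∃ Pstar ∈ US, ∀ (s : S) (a : A), ∀ P ∈ US,
    (∑ s', Pstar s a s' * V s') ≤ ∑ s', P s a s' * V s'


section Toolkit

open Finset

variable {ι : Type*} [Fintype ι]

lemma wsum_le_wsum {p f g : ι → ℝ} (hp : p ∈ stdSimplex ℝ ι) (h : ∀ i, f i ≤ g i) :
    ∑ i, p i * f i ≤ ∑ i, p i * g i :=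
  Finset.sum_le_sum fun i _ => mul_le_mul_of_nonneg_left (h i) (hp.1 i)

lemma wsum_le_const {p f : ι → ℝ} {c : ℝ} (hp : p ∈ stdSimplex ℝ ι) (h : ∀ i, f i ≤ c) :
    ∑ i, p i * f i ≤ c := by
  calc ∑ i, p i * f i ≤ ∑ i, p i * c := wsum_le_wsum hp h
    _ = c := by rw [← Finset.sum_mul, hp.2, one_mul]

lemma const_le_wsum {p f : ι → ℝ} {c : ℝ} (hp : p ∈ stdSimplex ℝ ι) (h : ∀ i, c ≤ f i) :
    c ≤ ∑ i, p i * f i := by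
  calc (c : ℝ) = ∑ i, p i * c := by rw [← Finset.sum_mul, hp.2, one_mul]
    _ ≤ ∑ i, p i * f i := wsum_le_wsum hp h

lemma abs_wsum_le {p f : ι → ℝ} {c : ℝ} (hp : p ∈ stdSimplex ℝ ι) (h : ∀ i, |f i| ≤ c) :
    |∑ i, p i * f i| ≤ c := by
  have h1 : |∑ i, p i * f i| ≤ ∑ i, |p i * f i| := Finset.abs_sum_le_sum_abs _ _
  refine h1.trans ?_
  have : ∀ i ∈ Finset.univ, |p i * f i| = p i * |f i| := by
    intro i _; rw [abs_mul, abs_of_nonneg (hp.1 i)]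
  rw [Finset.sum_congr rfl this]
  exact wsum_le_const hp h

lemma wsum_add_const {p f : ι → ℝ} {c : ℝ} (hp : p ∈ stdSimplex ℝ ι) :
    ∑ i, p i * (f i + c) = (∑ i, p i * f i) + c := by
  have : ∀ i ∈ Finset.univ, p i * (f i + c) = p i * f i + p i * c := fun i _ => mul_add _ _ _
  rw [Finset.sum_congr rfl this, Finset.sum_add_distrib, ← Finset.sum_mul, hp.2, one_mul]

lemma wsum_const_add {p f : ι → ℝ} {c : ℝ} (hp : p ∈ stdSimplex ℝ ι) :
    ∑ i, p i * (c + f i) = c + ∑ i, p i * f i := by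
  have : ∀ i ∈ Finset.univ, p i * (c + f i) = p i * (f i + c) := by intro i _; ring
  rw [Finset.sum_congr rfl this, wsum_add_const hp, add_comm]

lemma exists_abs_bound [Nonempty ι] (f : ι → ℝ) : ∃ B : ℝ, 0 ≤ B ∧ ∀ i, |f i| ≤ B := by
  refine ⟨Finset.univ.sup' Finset.univ_nonempty (fun i => |f i|), ?_, ?_⟩
  · exact le_trans (abs_nonneg _)
      (Finset.le_sup' (fun i => |f i|) (Finset.mem_univ (Classical.arbitrary ι)))
  · exact fun i => Finset.le_sup' (fun i => |f i|) (Finset.mem_univ i)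

section MinMax
variable {K : Type*} {K0 : Set K} {f g : K → ℝ} {B c : ℝ}

lemma bddBelow_image' (h : ∀ k ∈ K0, B ≤ f k) : BddBelow (f '' K0) := by
  refine ⟨B, ?_⟩; rintro x ⟨k, hk, rfl⟩; exact h k hk

lemma bddAbove_image' (h : ∀ k ∈ K0, f k ≤ B) : BddAbove (f '' K0) := by
  refine ⟨B, ?_⟩; rintro x ⟨k, hk, rfl⟩; exact h k hk

lemma minOver_le (hb : BddBelow (f '' K0)) {k : K} (hk : k ∈ K0) : minOver K0 f ≤ f k :=
  csInf_le hb ⟨k, hk, rfl⟩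

lemma le_minOver (hne : K0.Nonempty) (h : ∀ k ∈ K0, c ≤ f k) : c ≤ minOver K0 f :=
  le_csInf (hne.image f) (by rintro x ⟨k, hk, rfl⟩; exact h k hk)

lemma le_maxOver (hb : BddAbove (f '' K0)) {k : K} (hk : k ∈ K0) : f k ≤ maxOver K0 f :=
  le_csSup hb ⟨k, hk, rfl⟩

lemma maxOver_le (hne : K0.Nonempty) (h : ∀ k ∈ K0, f k ≤ c) : maxOver K0 f ≤ c :=
  csSup_le (hne.image f) (by rintro x ⟨k, hk, rfl⟩; exact h k hk)

lemma minOver_le_minOver_add (hne : K0.Nonempty) (hbf : BddBelow (f '' K0))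
    (h : ∀ k ∈ K0, f k ≤ g k + c) : minOver K0 f ≤ minOver K0 g + c := by
  have : minOver K0 f - c ≤ minOver K0 g :=
    le_minOver hne (fun k hk => by
      have := (minOver_le hbf hk).trans (h k hk); linarith)
  linarith

lemma maxOver_le_maxOver_add (hne : K0.Nonempty) (hbg : BddAbove (g '' K0))
    (h : ∀ k ∈ K0, f k ≤ g k + c) : maxOver K0 f ≤ maxOver K0 g + c :=
  maxOver_le hne (fun k hk => (h k hk).trans (add_le_add (le_maxOver hbg hk) le_rfl))

lemma minOver_affine (hne : K0.Nonempty) {γ : ℝ} (hγ0 : 0 ≤ γ)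
    (hbf : BddBelow (f '' K0)) :
    minOver K0 (fun k => c + γ * f k) = c + γ * minOver K0 f := by
  refine le_antisymm ?_ ?_
  · rcases eq_or_lt_of_le hγ0 with hγ | hγ
    · obtain ⟨k, hk⟩ := hne
      have h1 : minOver K0 (fun k => c + γ * f k) ≤ c + γ * f k :=
        minOver_le (bddBelow_image' (B := c + γ * minOver K0 f)
          (fun k' hk' => by rw [← hγ]; simp)) hk
      rw [← hγ] at h1 ⊢; simpa using h1
    · refine le_of_forall_pos_le_add ?_
      intro ε hε
      have h2 : sInf (f '' K0) < minOver K0 f + ε / γ := by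
        have : (0:ℝ) < ε / γ := div_pos hε hγ
        unfold minOver; linarith
      obtain ⟨x, ⟨k, hk, rfl⟩, hlt⟩ := exists_lt_of_csInf_lt (hne.image f) h2
      have h3 : minOver K0 (fun k => c + γ * f k) ≤ c + γ * f k :=
        minOver_le (bddBelow_image' (B := c + γ * (minOver K0 f))
          (fun k' hk' => by
            have := minOver_le hbf hk'
            nlinarith)) hk
      have : γ * f k ≤ γ * minOver K0 f + ε := by
        have := (mul_le_mul_of_nonneg_left hlt.le hγ0)
        rw [mul_add] at this
        rw [mul_div_cancel₀ _ (ne_of_gt hγ)] at this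
        linarith
      linarith
  · refine le_minOver hne (fun k hk => ?_)
    have := minOver_le hbf hk
    nlinarith

end MinMax

lemma continuousOn_of_dominated {X : Type*} [TopologicalSpace X] {g : X → ℝ} {K0 : Set X}
    (h : ∀ q ∈ K0, ∃ Ψ : X → ℝ, Continuous Ψ ∧ Ψ q = 0 ∧ ∀ p ∈ K0, |g p - g q| ≤ Ψ p) :
    ContinuousOn g K0 := by
  intro q hq
  obtain ⟨Ψ, hΨc, hΨ0, hΨ⟩ := h q hq
  rw [ContinuousWithinAt, tendsto_iff_dist_tendsto_zero]
  have hT : Filter.Tendsto Ψ (nhdsWithin q K0) (nhds 0) := by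
    have : Filter.Tendsto Ψ (nhdsWithin q K0) (nhds (Ψ q)) :=
      (hΨc.tendsto q).mono_left nhdsWithin_le_nhds
    rwa [hΨ0] at this
  refine squeeze_zero' (g := Ψ) (Filter.Eventually.of_forall fun _ => dist_nonneg) ?_ hT
  filter_upwards [self_mem_nhdsWithin] with p hp
  rw [Real.dist_eq]
  exact hΨ p hp

end Toolkit
section Ops
set_option linter.unusedSectionVars false

open Finset

variable {S A : Type*} [Fintype S] [Fintype A] [Nonempty S] [Nonempty A]
variable {US : Set (S → A → S → ℝ)} {π : S → A → ℝ} {r : S → A → S → ℝ} {γ : ℝ}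
variable {P : S → A → S → ℝ} {x y : S → ℝ} {c : ℝ} {s : S}

lemma tpi_apply (v : S → ℝ) (s : S) :
    Tpi US π r γ v s = minOver US (fun P => TpiP π r γ P v s) := rfl

lemma topt_apply (v : S → ℝ) (s : S) :
    Topt US r γ v s
      = maxOver (stdSimplex ℝ A) (fun p => minOver US (fun P => TpiP (fun _ => p) r γ P v s)) :=
  rfl

lemma tpiP_mono (hγ0 : 0 ≤ γ) (hπ : π s ∈ stdSimplex ℝ A) (hP : IsKernel P)
    (hxy : ∀ s', x s' ≤ y s' + c) :
    TpiP π r γ P x s ≤ TpiP π r γ P y s + γ * c := by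
  unfold TpiP
  have key : ∀ a, ∑ s', P s a s' * (r s a s' + γ * x s')
      ≤ (∑ s', P s a s' * (r s a s' + γ * y s')) + γ * c := by
    intro a
    have h1 : ∀ s', r s a s' + γ * x s' ≤ (r s a s' + γ * y s') + γ * c := by
      intro s'
      have := mul_le_mul_of_nonneg_left (hxy s') hγ0
      nlinarith
    calc ∑ s', P s a s' * (r s a s' + γ * x s')
        ≤ ∑ s', P s a s' * ((r s a s' + γ * y s') + γ * c) := wsum_le_wsum (hP s a) h1
      _ = _ := wsum_add_const (hP s a)
  calc ∑ a, π s a * ∑ s', P s a s' * (r s a s' + γ * x s')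
      ≤ ∑ a, π s a * ((∑ s', P s a s' * (r s a s' + γ * y s')) + γ * c) := wsum_le_wsum hπ key
    _ = _ := wsum_add_const hπ

lemma tpiP_abs_le {R0 Bx : ℝ} (hγ0 : 0 ≤ γ) (hπ : π s ∈ stdSimplex ℝ A) (hP : IsKernel P)
    (hR : ∀ s a s', |r s a s'| ≤ R0) (hx : ∀ s', |x s'| ≤ Bx) :
    |TpiP π r γ P x s| ≤ R0 + γ * Bx := by
  unfold TpiP
  refine abs_wsum_le hπ fun a => abs_wsum_le (hP s a) fun s' => ?_
  have h2 : |γ * x s'| ≤ γ * Bx := by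
    rw [abs_mul, abs_of_nonneg hγ0]
    exact mul_le_mul_of_nonneg_left (hx s') hγ0
  calc |r s a s' + γ * x s'| ≤ |r s a s'| + |γ * x s'| := abs_add_le _ _
    _ ≤ R0 + γ * Bx := add_le_add (hR s a s') h2

lemma tpi_mono (hne : US.Nonempty) (hker : ∀ P ∈ US, IsKernel P) (hγ0 : 0 ≤ γ)
    (hπ : π s ∈ stdSimplex ℝ A) (hxy : ∀ s', x s' ≤ y s' + c) :
    Tpi US π r γ x s ≤ Tpi US π r γ y s + γ * c := by
  rw [tpi_apply, tpi_apply]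
  obtain ⟨R0, hR0, hR⟩ := exists_abs_bound (fun t : S × A × S => r t.1 t.2.1 t.2.2)
  obtain ⟨Bx, hBx0, hx⟩ := exists_abs_bound x
  refine minOver_le_minOver_add hne
    (bddBelow_image' (B := -(R0 + γ * Bx)) fun P hP =>
      neg_le_of_abs_le (tpiP_abs_le hγ0 hπ (hker P hP) (fun s a s' => hR (s, a, s')) hx))
    fun P hP => tpiP_mono hγ0 hπ (hker P hP) hxy

lemma abs_minOver_tpiP_le {R0 Bx : ℝ} (hne : US.Nonempty) (hker : ∀ P ∈ US, IsKernel P)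
    (hγ0 : 0 ≤ γ) (hπ : π s ∈ stdSimplex ℝ A)
    (hR : ∀ s a s', |r s a s'| ≤ R0) (hx : ∀ s', |x s'| ≤ Bx) :
    |minOver US (fun P => TpiP π r γ P x s)| ≤ R0 + γ * Bx := by
  rw [abs_le]
  constructor
  · exact le_minOver hne fun P hP =>
      neg_le_of_abs_le (tpiP_abs_le hγ0 hπ (hker P hP) hR hx)
  · obtain ⟨P0, hP0⟩ := hne
    exact (minOver_le (bddBelow_image' (B := -(R0 + γ * Bx)) fun P hP =>
      neg_le_of_abs_le (tpiP_abs_le hγ0 hπ (hker P hP) hR hx)) hP0).trans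
      (le_of_abs_le (tpiP_abs_le hγ0 hπ (hker P0 hP0) hR hx))

lemma topt_mono (hne : US.Nonempty) (hker : ∀ P ∈ US, IsKernel P) (hγ0 : 0 ≤ γ)
    (hxy : ∀ s', x s' ≤ y s' + c) :
    Topt US r γ x s ≤ Topt US r γ y s + γ * c := by
  classical
  rw [topt_apply, topt_apply]
  obtain ⟨R0, hR0, hR'⟩ := exists_abs_bound (fun t : S × A × S => r t.1 t.2.1 t.2.2)
  have hR : ∀ s a s', |r s a s'| ≤ R0 := fun s a s' => hR' (s, a, s')
  obtain ⟨By, hBy0, hy⟩ := exists_abs_bound y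
  refine maxOver_le_maxOver_add ⟨_, ite_eq_mem_stdSimplex ℝ (Classical.arbitrary A)⟩
    (bddAbove_image' (B := R0 + γ * By) fun p hp =>
      le_of_abs_le (abs_minOver_tpiP_le hne hker hγ0 hp hR hy))
    fun p hp => ?_
  obtain ⟨Bx, hBx0, hx⟩ := exists_abs_bound x
  exact minOver_le_minOver_add hne
    (bddBelow_image' (B := -(R0 + γ * Bx)) fun P hP =>
      neg_le_of_abs_le (tpiP_abs_le hγ0 hp (hker P hP) hR hx))
    fun P hP => tpiP_mono hγ0 hp (hker P hP) hxy

lemma lipschitz_of_step {T : (S → ℝ) → (S → ℝ)} (hγ0 : 0 ≤ γ)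
    (hstep : ∀ x y : S → ℝ, ∀ c : ℝ, 0 ≤ c → (∀ s', x s' ≤ y s' + c) → ∀ s, T x s ≤ T y s + γ * c) :
    LipschitzWith ⟨γ, hγ0⟩ T := by
  refine LipschitzWith.of_dist_le_mul fun x y => ?_
  have hd : (0:ℝ) ≤ dist x y := dist_nonneg
  show dist (T x) (T y) ≤ γ * dist x y
  rw [dist_pi_le_iff (by positivity)]
  intro s
  have hxy : ∀ s', x s' ≤ y s' + dist x y := fun s' => by
    have h1 : dist (x s') (y s') ≤ dist x y := dist_le_pi_dist x y s'
    rw [Real.dist_eq] at h1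
    have := (abs_le.mp h1).2
    linarith
  have hyx : ∀ s', y s' ≤ x s' + dist x y := fun s' => by
    have h1 : dist (x s') (y s') ≤ dist x y := dist_le_pi_dist x y s'
    rw [Real.dist_eq] at h1
    have := (abs_le.mp h1).1
    linarith
  rw [Real.dist_eq, abs_le]
  constructor
  · have := hstep y x (dist x y) hd hyx s
    linarith
  · have := hstep x y (dist x y) hd hxy s
    linarith

lemma contractingWith_of_step {T : (S → ℝ) → (S → ℝ)} (hγ0 : 0 ≤ γ) (hγ1 : γ < 1)
    (hstep : ∀ x y : S → ℝ, ∀ c : ℝ, 0 ≤ c → (∀ s', x s' ≤ y s' + c) → ∀ s, T x s ≤ T y s + γ * c) :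
    ContractingWith ⟨γ, hγ0⟩ T :=
  ⟨by exact_mod_cast hγ1, lipschitz_of_step hγ0 hstep⟩

lemma step_tpiP (hγ0 : 0 ≤ γ) (hπ : IsPolicy π) (hP : IsKernel P) :
    ∀ x y : S → ℝ, ∀ c : ℝ, 0 ≤ c → (∀ s', x s' ≤ y s' + c) →
      ∀ s, TpiP π r γ P x s ≤ TpiP π r γ P y s + γ * c :=
  fun _ _ _ _ hxy s => tpiP_mono hγ0 (hπ s) hP hxy

lemma step_tpi (hne : US.Nonempty) (hker : ∀ P ∈ US, IsKernel P) (hγ0 : 0 ≤ γ)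
    (hπ : IsPolicy π) :
    ∀ x y : S → ℝ, ∀ c : ℝ, 0 ≤ c → (∀ s', x s' ≤ y s' + c) →
      ∀ s, Tpi US π r γ x s ≤ Tpi US π r γ y s + γ * c :=
  fun _ _ _ _ hxy s => tpi_mono hne hker hγ0 (hπ s) hxy

lemma step_topt (hne : US.Nonempty) (hker : ∀ P ∈ US, IsKernel P) (hγ0 : 0 ≤ γ) :
    ∀ x y : S → ℝ, ∀ c : ℝ, 0 ≤ c → (∀ s', x s' ≤ y s' + c) →
      ∀ s, Topt US r γ x s ≤ Topt US r γ y s + γ * c :=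
  fun _ _ _ _ hxy s => topt_mono hne hker hγ0 hxy

lemma le_of_oneshot (hγ0 : 0 ≤ γ) (hγ1 : γ < 1) {T : (S → ℝ) → (S → ℝ)}
    (hstep : ∀ x y : S → ℝ, ∀ c : ℝ, 0 ≤ c → (∀ s', x s' ≤ y s' + c) → ∀ s, T x s ≤ T y s + γ * c)
    {x y : S → ℝ} (hx : T x = x) (hy : ∀ s, T y s ≤ y s) : ∀ s, x s ≤ y s := by
  set M := Finset.univ.sup' Finset.univ_nonempty (fun s => x s - y s) with hM
  set D := max 0 M with hD
  have hD0 : 0 ≤ D := le_max_left _ _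
  have hMD : M ≤ D := le_max_right _ _
  have hxy : ∀ s', x s' ≤ y s' + D := fun s' => by
    have h1 : x s' - y s' ≤ M := Finset.le_sup' (fun s => x s - y s) (Finset.mem_univ s')
    linarith
  have key : ∀ s, x s ≤ y s + γ * D := fun s => by
    have h1 := hstep x y D hD0 hxy s
    rw [hx] at h1
    linarith [hy s]
  have hMγ : M ≤ γ * D := by
    apply Finset.sup'_le
    intro s _
    linarith [key s]
  have hDγ : D ≤ γ * D := by
    rw [hD]
    exact max_le (by positivity) hMγ
  have hD_le : D ≤ 0 := by nlinarith
  intro s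
  have h1 : x s - y s ≤ M := Finset.le_sup' (fun s => x s - y s) (Finset.mem_univ s)
  nlinarith

lemma fixed_point_unique {T : (S → ℝ) → (S → ℝ)} (hγ0 : 0 ≤ γ) (hγ1 : γ < 1)
    (hstep : ∀ x y : S → ℝ, ∀ c : ℝ, 0 ≤ c → (∀ s', x s' ≤ y s' + c) → ∀ s, T x s ≤ T y s + γ * c)
    {x y : S → ℝ} (hx : T x = x) (hy : T y = y) : x = y :=
  (contractingWith_of_step hγ0 hγ1 hstep).fixedPoint_unique' hx hy

lemma tpi_le_tpiP (hker : ∀ P ∈ US, IsKernel P) (hγ0 : 0 ≤ γ)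
    (hπ : π s ∈ stdSimplex ℝ A) (hP : P ∈ US) (x : S → ℝ) :
    Tpi US π r γ x s ≤ TpiP π r γ P x s := by
  rw [tpi_apply]
  obtain ⟨R0, hR0, hR'⟩ := exists_abs_bound (fun t : S × A × S => r t.1 t.2.1 t.2.2)
  obtain ⟨Bx, hBx0, hx⟩ := exists_abs_bound x
  exact minOver_le (bddBelow_image' (B := -(R0 + γ * Bx)) fun Q hQ =>
    neg_le_of_abs_le (tpiP_abs_le hγ0 hπ (hker Q hQ)
      (fun s a s' => hR' (s, a, s')) hx)) hP

lemma tpi_le_topt (hne : US.Nonempty) (hker : ∀ P ∈ US, IsKernel P) (hγ0 : 0 ≤ γ)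
    (hπ : π s ∈ stdSimplex ℝ A) (x : S → ℝ) :
    Tpi US π r γ x s ≤ Topt US r γ x s := by
  rw [tpi_apply, topt_apply]
  obtain ⟨R0, hR0, hR'⟩ := exists_abs_bound (fun t : S × A × S => r t.1 t.2.1 t.2.2)
  have hR : ∀ s a s', |r s a s'| ≤ R0 := fun s a s' => hR' (s, a, s')
  obtain ⟨Bx, hBx0, hx⟩ := exists_abs_bound x
  have := le_maxOver (f := fun p => minOver US fun P => TpiP (fun _ => p) r γ P x s)
    (bddAbove_image' (B := R0 + γ * Bx) fun p hp =>
      le_of_abs_le (abs_minOver_tpiP_le hne hker hγ0 hp hR hx)) hπ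
  exact this

end Ops
section VHH
set_option linter.unusedSectionVars false

open Finset

variable {S A : Type*} [Fintype S] [Fintype A] [Nonempty S] [Nonempty A]
variable {r : S → A → S → ℝ} {γ : ℝ} {P : S → A → S → ℝ}
variable {πh : List (S × A) → S → A → ℝ}

lemma expRHH_zero (Q : List (S × A) → S → A → S → ℝ) (h : List (S × A)) (s : S) :
    expRHH πh Q r 0 h s = ∑ a, πh h s a * ∑ s', Q (h ++ [(s, a)]) s a s' * r s a s' := rfl

lemma expRHH_succ (Q : List (S × A) → S → A → S → ℝ) (t : ℕ) (h : List (S × A)) (s : S) :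
    expRHH πh Q r (t + 1) h s
      = ∑ a, πh h s a * ∑ s', Q (h ++ [(s, a)]) s a s' * expRHH πh Q r t (h ++ [(s, a)]) s' := rfl

lemma expRHH_abs_le {R0 : ℝ} (hπ : IsHPolicy πh) (hP : IsKernel P)
    (hR : ∀ s a s', |r s a s'| ≤ R0) :
    ∀ (t : ℕ) (h : List (S × A)) (s : S), |expRHH πh (fun _ => P) r t h s| ≤ R0 := by
  intro t
  induction t with
  | zero =>
    intro h s
    exact abs_wsum_le (hπ h s) fun a => abs_wsum_le (hP s a) fun s' => hR s a s'
  | succ t ih =>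
    intro h s
    exact abs_wsum_le (hπ h s) fun a => abs_wsum_le (hP s a) fun s' => ih _ s'

lemma summable_expRHH {R0 : ℝ} (hγ0 : 0 ≤ γ) (hγ1 : γ < 1) (hπ : IsHPolicy πh) (hP : IsKernel P)
    (hR : ∀ s a s', |r s a s'| ≤ R0) (h : List (S × A)) (s : S) :
    Summable (fun t => γ ^ t * expRHH πh (fun _ => P) r t h s) := by
  refine Summable.of_abs (Summable.of_nonneg_of_le (fun t => abs_nonneg _) (fun t => ?_)
    ((summable_geometric_of_lt_one hγ0 hγ1).mul_left R0))
  rw [abs_mul, abs_pow, abs_of_nonneg hγ0]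
  calc γ ^ t * |expRHH πh (fun _ => P) r t h s| ≤ γ ^ t * R0 :=
        mul_le_mul_of_nonneg_left (expRHH_abs_le hπ hP hR t h s) (by positivity)
    _ = R0 * γ ^ t := mul_comm _ _

lemma vHH_abs_le {R0 : ℝ} (hγ0 : 0 ≤ γ) (hγ1 : γ < 1) (hπ : IsHPolicy πh) (hP : IsKernel P)
    (hR : ∀ s a s', |r s a s'| ≤ R0) (s : S) :
    |vHH πh (fun _ => P) r γ s| ≤ R0 * (1 - γ)⁻¹ := by
  unfold vHH
  have hsum := summable_expRHH hγ0 hγ1 hπ hP hR ([] : List (S × A)) s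
  have habs : Summable (fun t => |γ ^ t * expRHH πh (fun _ => P) r t [] s|) := by
    refine Summable.of_nonneg_of_le (fun t => abs_nonneg _) (fun t => ?_)
      ((summable_geometric_of_lt_one hγ0 hγ1).mul_left R0)
    rw [abs_mul, abs_pow, abs_of_nonneg hγ0]
    calc γ ^ t * |expRHH πh (fun _ => P) r t [] s| ≤ γ ^ t * R0 :=
          mul_le_mul_of_nonneg_left (expRHH_abs_le hπ hP hR t [] s) (by positivity)
      _ = R0 * γ ^ t := mul_comm _ _
  have h0 : ‖∑' t, γ ^ t * expRHH πh (fun _ => P) r t [] s‖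
      ≤ ∑' t, ‖γ ^ t * expRHH πh (fun _ => P) r t [] s‖ :=
    norm_tsum_le_tsum_norm (by simpa only [Real.norm_eq_abs] using habs)
  simp only [Real.norm_eq_abs] at h0
  calc |∑' t, γ ^ t * expRHH πh (fun _ => P) r t [] s|
      ≤ ∑' t, |γ ^ t * expRHH πh (fun _ => P) r t [] s| := h0
    _ ≤ ∑' t, R0 * γ ^ t := by
        refine Summable.tsum_le_tsum (fun t => ?_) habs ((summable_geometric_of_lt_one hγ0 hγ1).mul_left R0)
        rw [abs_mul, abs_pow, abs_of_nonneg hγ0]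
        calc γ ^ t * |expRHH πh (fun _ => P) r t [] s| ≤ γ ^ t * R0 :=
              mul_le_mul_of_nonneg_left (expRHH_abs_le hπ hP hR t [] s) (by positivity)
          _ = R0 * γ ^ t := mul_comm _ _
    _ = R0 * (1 - γ)⁻¹ := by rw [tsum_mul_left, tsum_geometric_of_lt_one hγ0 hγ1]

lemma expRHH_lift_hist_indep (π : S → A → ℝ) (t : ℕ) :
    ∀ (h : List (S × A)) (s : S),
      expRHH (fun _ => π) (fun _ => P) r t h s = expRHH (fun _ => π) (fun _ => P) r t [] s := by
  induction t with
  | zero => intro h s; rfl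
  | succ t ih =>
    intro h s
    rw [expRHH_succ, expRHH_succ]
    refine Finset.sum_congr rfl fun a _ => ?_
    congr 1
    refine Finset.sum_congr rfl fun s' _ => ?_
    rw [ih (h ++ [(s, a)]) s', ih ([] ++ [(s, a)]) s']

lemma expRHH_lift_succ (π : S → A → ℝ) (t : ℕ) (s : S) :
    expRHH (fun _ => π) (fun _ => P) r (t + 1) [] s
      = ∑ a, π s a * ∑ s', P s a s' * expRHH (fun _ => π) (fun _ => P) r t [] s' := by
  rw [expRHH_succ]
  exact Finset.sum_congr rfl fun a _ => by
    congr 1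
    exact Finset.sum_congr rfl fun s' _ => by rw [expRHH_lift_hist_indep]

lemma vHH_lift_fixed (hγ0 : 0 ≤ γ) (hγ1 : γ < 1) {π : S → A → ℝ} (hπ : IsPolicy π)
    (hP : IsKernel P) :
    TpiP π r γ P (fun s => vHH (fun _ => π) (fun _ => P) r γ s)
      = fun s => vHH (fun _ => π) (fun _ => P) r γ s := by
  obtain ⟨R0, hR0, hR'⟩ := exists_abs_bound (fun t : S × A × S => r t.1 t.2.1 t.2.2)
  have hR : ∀ s a s', |r s a s'| ≤ R0 := fun s a s' => hR' (s, a, s')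
  have hπh : IsHPolicy (fun (_ : List (S × A)) => π) := fun _ s => hπ s
  have hsum : ∀ s : S, Summable (fun t => γ ^ t * expRHH (fun _ => π) (fun _ => P) r t [] s) :=
    fun s => summable_expRHH hγ0 hγ1 hπh hP hR [] s
  set e : ℕ → S → ℝ := fun t s => expRHH (fun _ => π) (fun _ => P) r t [] s with he
  set g : S → ℝ := fun s => vHH (fun _ => π) (fun _ => P) r γ s with hg
  have hgs : ∀ s, g s = ∑' t, γ ^ t * e t s := fun s => rfl
  funext s
  have shift : g s = e 0 s + ∑' t, γ ^ (t + 1) * e (t + 1) s := by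
    rw [hgs, Summable.tsum_eq_zero_add (hsum s)]
    simp
    rfl
  have term_eq : ∀ t : ℕ, γ ^ (t + 1) * e (t + 1) s
      = ∑ a, ∑ s', π s a * (P s a s' * (γ * (γ ^ t * e t s'))) := by
    intro t
    have : e (t + 1) s = ∑ a, π s a * ∑ s', P s a s' * e t s' := expRHH_lift_succ π t s
    rw [this, Finset.mul_sum]
    refine Finset.sum_congr rfl fun a _ => ?_
    rw [Finset.mul_sum, Finset.mul_sum]
    refine Finset.sum_congr rfl fun s' _ => ?_
    ring
  have tail_eq : (∑' t, γ ^ (t + 1) * e (t + 1) s)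
      = ∑ a, ∑ s', π s a * (P s a s' * (γ * g s')) := by
    have hsum2 : ∀ (a : A) (s' : S), Summable (fun t => π s a * (P s a s' * (γ * (γ ^ t * e t s')))) := by
      intro a s'
      exact (((hsum s').mul_left γ).mul_left (P s a s')).mul_left (π s a)
    calc (∑' t, γ ^ (t + 1) * e (t + 1) s)
        = ∑' t, ∑ a, ∑ s', π s a * (P s a s' * (γ * (γ ^ t * e t s'))) := by
          exact tsum_congr fun t => term_eq t
      _ = ∑ a, ∑' t, ∑ s', π s a * (P s a s' * (γ * (γ ^ t * e t s'))) := by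
          refine Summable.tsum_finsetSum fun a _ => ?_
          exact summable_sum fun s' _ => hsum2 a s'
      _ = ∑ a, ∑ s', ∑' t, π s a * (P s a s' * (γ * (γ ^ t * e t s'))) := by
          refine Finset.sum_congr rfl fun a _ => ?_
          exact Summable.tsum_finsetSum fun s' _ => hsum2 a s'
      _ = ∑ a, ∑ s', π s a * (P s a s' * (γ * g s')) := by
          refine Finset.sum_congr rfl fun a _ => Finset.sum_congr rfl fun s' _ => ?_
          rw [tsum_mul_left, tsum_mul_left, tsum_mul_left, hgs s']
  have e0 : e 0 s = ∑ a, π s a * ∑ s', P s a s' * r s a s' := rfl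
  show ∑ a, π s a * ∑ s', P s a s' * (r s a s' + γ * g s') = g s
  rw [shift, e0, tail_eq, ← Finset.sum_add_distrib]
  refine Finset.sum_congr rfl fun a _ => ?_
  rw [Finset.mul_sum, Finset.mul_sum, ← Finset.sum_add_distrib]
  exact Finset.sum_congr rfl fun s' _ => by ring

lemma vHH_lift_eq (hγ0 : 0 ≤ γ) (hγ1 : γ < 1) {π : S → A → ℝ} (hπ : IsPolicy π)
    (hP : IsKernel P) {v : S → ℝ} (hv : TpiP π r γ P v = v) (s : S) :
    vHH (fun _ => π) (fun _ => P) r γ s = v s := by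
  have := fixed_point_unique hγ0 hγ1 (step_tpiP hγ0 hπ hP)
    (vHH_lift_fixed hγ0 hγ1 hπ hP) hv
  exact congrFun this s

lemma vHH_le_of_E {vst : S → ℝ} (hγ0 : 0 ≤ γ) (hγ1 : γ < 1) (hπ : IsHPolicy πh)
    (hP : IsKernel P)
    (hE : ∀ s a, ∑ s', P s a s' * (r s a s' + γ * vst s') ≤ vst s) (s : S) :
    vHH πh (fun _ => P) r γ s ≤ vst s := by
  obtain ⟨R0, hR0, hR'⟩ := exists_abs_bound (fun t : S × A × S => r t.1 t.2.1 t.2.2)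
  have hR : ∀ s a s', |r s a s'| ≤ R0 := fun s a s' => hR' (s, a, s')
  set C := max 0 (Finset.univ.sup' Finset.univ_nonempty (fun s => -vst s)) with hC
  have hC0 : 0 ≤ C := le_max_left _ _
  have hCv : ∀ s', -vst s' ≤ C :=
    fun s' => le_trans (Finset.le_sup' (fun s => -vst s) (Finset.mem_univ s')) (le_max_right _ _)
  have main : ∀ (T : ℕ) (h : List (S × A)) (s : S),
      (∑ t ∈ Finset.range T, γ ^ t * expRHH πh (fun _ => P) r t h s) ≤ vst s + γ ^ T * C := by
    intro T
    induction T with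
    | zero =>
      intro h s
      simp only [Finset.range_zero, Finset.sum_empty, pow_zero, one_mul]
      linarith [hCv s]
    | succ T ih =>
      intro h s
      rw [Finset.sum_range_succ' (fun t => γ ^ t * expRHH πh (fun _ => P) r t h s) T]
      have swap : (∑ k ∈ Finset.range T, γ ^ (k + 1) * expRHH πh (fun _ => P) r (k + 1) h s)
          = ∑ a, πh h s a * ∑ s', P s a s' *
              (γ * ∑ k ∈ Finset.range T, γ ^ k * expRHH πh (fun _ => P) r k (h ++ [(s, a)]) s') := by
        have hterm : ∀ k ∈ Finset.range T, γ ^ (k + 1) * expRHH πh (fun _ => P) r (k + 1) h s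
            = ∑ a, ∑ s', πh h s a * (P s a s' *
                (γ * (γ ^ k * expRHH πh (fun _ => P) r k (h ++ [(s, a)]) s'))) := by
          intro k _
          rw [expRHH_succ, Finset.mul_sum]
          refine Finset.sum_congr rfl fun a _ => ?_
          rw [Finset.mul_sum, Finset.mul_sum]
          exact Finset.sum_congr rfl fun s' _ => by ring
        have L : (∑ k ∈ Finset.range T, γ ^ (k + 1) * expRHH πh (fun _ => P) r (k + 1) h s)
            = ∑ a, ∑ s', ∑ k ∈ Finset.range T, πh h s a * (P s a s' *
                (γ * (γ ^ k * expRHH πh (fun _ => P) r k (h ++ [(s, a)]) s'))) := by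
          rw [Finset.sum_congr rfl hterm, Finset.sum_comm]
          try exact Finset.sum_congr rfl fun a _ => Finset.sum_comm
        have Rr : (∑ a, πh h s a * ∑ s', P s a s' *
              (γ * ∑ k ∈ Finset.range T, γ ^ k * expRHH πh (fun _ => P) r k (h ++ [(s, a)]) s'))
            = ∑ a, ∑ s', ∑ k ∈ Finset.range T, πh h s a * (P s a s' *
                (γ * (γ ^ k * expRHH πh (fun _ => P) r k (h ++ [(s, a)]) s'))) := by
          refine Finset.sum_congr rfl fun a _ => ?_
          rw [Finset.mul_sum]
          refine Finset.sum_congr rfl fun s' _ => ?_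
          rw [Finset.mul_sum, Finset.mul_sum, Finset.mul_sum]
          try exact Finset.sum_congr rfl fun k _ => by ring
        rw [L, Rr]
      rw [swap]
      have bound_a : ∀ a, (∑ s', P s a s' *
          (γ * ∑ k ∈ Finset.range T, γ ^ k * expRHH πh (fun _ => P) r k (h ++ [(s, a)]) s'))
          + (∑ s', P s a s' * r s a s') ≤ vst s + γ ^ (T + 1) * C := by
        intro a
        have h1 : ∀ s', P s a s' *
            (γ * ∑ k ∈ Finset.range T, γ ^ k * expRHH πh (fun _ => P) r k (h ++ [(s, a)]) s')
            ≤ P s a s' * (γ * (vst s' + γ ^ T * C)) := by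
          intro s'
          refine mul_le_mul_of_nonneg_left ?_ ((hP s a).1 s')
          exact mul_le_mul_of_nonneg_left (ih (h ++ [(s, a)]) s') hγ0
        have h2 : (∑ s', P s a s' *
            (γ * ∑ k ∈ Finset.range T, γ ^ k * expRHH πh (fun _ => P) r k (h ++ [(s, a)]) s'))
            ≤ ∑ s', P s a s' * (γ * (vst s' + γ ^ T * C)) := Finset.sum_le_sum fun s' _ => h1 s'
        have h3 : (∑ s', P s a s' * (γ * (vst s' + γ ^ T * C))) + (∑ s', P s a s' * r s a s')
            = (∑ s', P s a s' * (r s a s' + γ * vst s')) + γ ^ (T + 1) * C := by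
          rw [← Finset.sum_add_distrib]
          have hsplit : ∀ s' ∈ Finset.univ,
              P s a s' * (γ * (vst s' + γ ^ T * C)) + P s a s' * r s a s'
              = P s a s' * (r s a s' + γ * vst s') + P s a s' * (γ ^ (T + 1) * C) := by
            intro s' _; ring
          rw [Finset.sum_congr rfl hsplit, Finset.sum_add_distrib, ← Finset.sum_mul, (hP s a).2,
            one_mul]
        have h4 := hE s a
        linarith
      calc (∑ a, πh h s a * ∑ s', P s a s' *
            (γ * ∑ k ∈ Finset.range T, γ ^ k * expRHH πh (fun _ => P) r k (h ++ [(s, a)]) s'))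
            + γ ^ 0 * expRHH πh (fun _ => P) r 0 h s
          = ∑ a, πh h s a * ((∑ s', P s a s' *
              (γ * ∑ k ∈ Finset.range T, γ ^ k * expRHH πh (fun _ => P) r k (h ++ [(s, a)]) s'))
              + (∑ s', P s a s' * r s a s')) := by
            rw [pow_zero, one_mul, expRHH_zero, ← Finset.sum_add_distrib]
            exact Finset.sum_congr rfl fun a _ => by ring
        _ ≤ vst s + γ ^ (T + 1) * C := wsum_le_const (hπ h s) bound_a
  have htendsto1 : Filter.Tendsto
      (fun T => ∑ t ∈ Finset.range T, γ ^ t * expRHH πh (fun _ => P) r t [] s)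
      Filter.atTop (nhds (vHH πh (fun _ => P) r γ s)) :=
    (summable_expRHH hγ0 hγ1 hπ hP hR [] s).hasSum.tendsto_sum_nat
  have htendsto2 : Filter.Tendsto (fun T : ℕ => vst s + γ ^ T * C) Filter.atTop (nhds (vst s)) := by
    have h0 : Filter.Tendsto (fun T : ℕ => γ ^ T) Filter.atTop (nhds 0) :=
      tendsto_pow_atTop_nhds_zero_of_lt_one hγ0 hγ1
    have := (h0.mul_const C).const_add (vst s)
    simpa using this
  exact le_of_tendsto_of_tendsto' htendsto1 htendsto2 fun T => main T [] s

end VHH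
section Core
set_option linter.unusedSectionVars false

open Finset

variable {S A : Type*} [Fintype S] [Fintype A] [Nonempty S] [Nonempty A]
variable {US : Set (S → A → S → ℝ)} {π : S → A → ℝ} {r : S → A → S → ℝ} {γ : ℝ}

lemma minOver_congr {K : Type*} {K0 : Set K} {f g : K → ℝ} (h : ∀ k ∈ K0, f k = g k) :
    minOver K0 f = minOver K0 g := by
  unfold minOver
  rw [Set.image_congr h]

lemma continuous_tpiP_in_P (π : S → A → ℝ) (r : S → A → S → ℝ) (γ : ℝ) (x : S → ℝ) (s : S) :
    Continuous (fun P : S → A → S → ℝ => TpiP π r γ P x s) := by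
  unfold TpiP
  refine continuous_finset_sum _ fun a _ => Continuous.mul continuous_const ?_
  refine continuous_finset_sum _ fun s' _ => Continuous.mul ?_ continuous_const
  exact (continuous_apply s').comp ((continuous_apply a).comp (continuous_apply s))

lemma tpiP_abs_diff (hγ0 : 0 ≤ γ) {s : S} (hπ : π s ∈ stdSimplex ℝ A) {P : S → A → S → ℝ}
    (hP : IsKernel P) {x y : S → ℝ} {D : ℝ} (hD : ∀ s', |x s' - y s'| ≤ D) :
    |TpiP π r γ P x s - TpiP π r γ P y s| ≤ γ * D := by
  rw [abs_le]
  constructor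
  · have := tpiP_mono (r := r) hγ0 hπ hP (x := y) (y := x) (c := D)
      (fun s' => by have := (abs_le.mp (hD s')).1; linarith)
    linarith
  · have := tpiP_mono (r := r) hγ0 hπ hP (x := x) (y := y) (c := D)
      (fun s' => by have := (abs_le.mp (hD s')).2; linarith)
    linarith

lemma attains_min (hne : US.Nonempty) (hcpt : IsCompact US) (hker : ∀ P ∈ US, IsKernel P)
    (hγ0 : 0 ≤ γ) (hγ1 : γ < 1) (hπ : IsPolicy π)
    {w : (S → A → S → ℝ) → S → ℝ} (hw : ∀ P ∈ US, TpiP π r γ P (w P) = w P)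
    (μ : S → ℝ) :
    ∃ P0 ∈ US, ∀ P ∈ US, (∑ s, μ s * w P0 s) ≤ ∑ s, μ s * w P s := by
  have h1γ : 0 < 1 - γ := by linarith
  set g : (S → A → S → ℝ) → ℝ := fun P => ∑ s, μ s * w P s with hg
  have hcont : ContinuousOn g US := by
    refine continuousOn_of_dominated fun Q hQ => ?_
    set Ψ : (S → A → S → ℝ) → ℝ :=
      fun P => ∑ s, |TpiP π r γ P (w Q) s - TpiP π r γ Q (w Q) s| with hΨdef
    have hΨc : Continuous Ψ := by
      refine continuous_finset_sum _ fun s _ => Continuous.abs ?_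
      exact (continuous_tpiP_in_P π r γ (w Q) s).sub continuous_const
    refine ⟨fun P => (∑ s, |μ s|) * (Ψ P * (1 - γ)⁻¹), by fun_prop, by simp [hΨdef], ?_⟩
    intro P hP
    -- D bound
    set D := Finset.univ.sup' Finset.univ_nonempty (fun s => |w P s - w Q s|) with hD
    have hDle : ∀ s, |w P s - w Q s| ≤ D :=
      fun s => Finset.le_sup' (fun s => |w P s - w Q s|) (Finset.mem_univ s)
    have hkey : ∀ s, |w P s - w Q s| ≤ γ * D + Ψ P := by
      intro s
      have e1 : w P s - w Q s
          = (TpiP π r γ P (w P) s - TpiP π r γ P (w Q) s)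
            + (TpiP π r γ P (w Q) s - TpiP π r γ Q (w Q) s) := by
        rw [hw P hP, hw Q hQ]
        ring
      have b1 : |TpiP π r γ P (w P) s - TpiP π r γ P (w Q) s| ≤ γ * D :=
        tpiP_abs_diff hγ0 (hπ s) (hker P hP) hDle
      have b2 : |TpiP π r γ P (w Q) s - TpiP π r γ Q (w Q) s| ≤ Ψ P := by
        refine Finset.single_le_sum (f := fun s => |TpiP π r γ P (w Q) s - TpiP π r γ Q (w Q) s|)
          (fun s _ => abs_nonneg _) (Finset.mem_univ s)
      calc |w P s - w Q s| ≤ |TpiP π r γ P (w P) s - TpiP π r γ P (w Q) s|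
            + |TpiP π r γ P (w Q) s - TpiP π r γ Q (w Q) s| := by rw [e1]; exact abs_add_le _ _
        _ ≤ γ * D + Ψ P := add_le_add b1 b2
    have hDb : D ≤ γ * D + Ψ P := by
      apply Finset.sup'_le
      intro s _
      exact hkey s
    have hD0 : 0 ≤ D := le_trans (abs_nonneg _) (hDle (Classical.arbitrary S))
    have hDfin : D ≤ Ψ P * (1 - γ)⁻¹ := by
      have h2 : D * (1 - γ) ≤ Ψ P := by nlinarith
      calc D = D * (1 - γ) * (1 - γ)⁻¹ := by field_simp
        _ ≤ Ψ P * (1 - γ)⁻¹ := mul_le_mul_of_nonneg_right h2 (by positivity)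
    have : |g P - g Q| ≤ (∑ s, |μ s|) * D := by
      rw [hg]
      have e2 : (∑ s, μ s * w P s) - ∑ s, μ s * w Q s = ∑ s, μ s * (w P s - w Q s) := by
        rw [← Finset.sum_sub_distrib]
        exact Finset.sum_congr rfl fun s _ => by ring
      rw [e2]
      calc |∑ s, μ s * (w P s - w Q s)| ≤ ∑ s, |μ s * (w P s - w Q s)| :=
            Finset.abs_sum_le_sum_abs _ _
        _ ≤ ∑ s, |μ s| * D := by
            refine Finset.sum_le_sum fun s _ => ?_
            rw [abs_mul]
            exact mul_le_mul_of_nonneg_left (hDle s) (abs_nonneg _)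
        _ = (∑ s, |μ s|) * D := by rw [Finset.sum_mul]
    refine this.trans ?_
    exact mul_le_mul_of_nonneg_left hDfin (Finset.sum_nonneg fun s _ => abs_nonneg _)
  obtain ⟨P0, hP0, hmin⟩ := hcpt.exists_isMinOn hne hcont
  exact ⟨P0, hP0, fun P hP => hmin hP⟩

end Core
section SSP
set_option linter.unusedSectionVars false

open Finset

variable {S A : Type*} [Fintype S] [Fintype A] [Nonempty S] [Nonempty A]
variable {US : Set (S → A → S → ℝ)} {π : S → A → ℝ} {r : S → A → S → ℝ} {γ : ℝ}

lemma uniform_mem_simplex {ι : Type*} [Fintype ι] [Nonempty ι] :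
    (fun _ : ι => ((Fintype.card ι : ℝ))⁻¹) ∈ stdSimplex ℝ ι := by
  constructor
  · intro i
    positivity
  · rw [Finset.sum_const, Finset.card_univ, nsmul_eq_mul, mul_inv_cancel₀]
    exact_mod_cast Fintype.card_ne_zero

lemma tpiP_NSI_eval (hrNSI : NextStateIndep r) {P : S → A → S → ℝ} (hPk : IsKernel P)
    (hπ : IsPolicy π) (hγ0 : 0 ≤ γ) (vst : S → ℝ) (s s0 : S) :
    TpiP π r γ P vst s
      = (∑ a, π s a * r s a s0) + γ * ∑ a, π s a * ∑ s', P s a s' * vst s' := by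
  show (∑ a, π s a * ∑ s', P s a s' * (r s a s' + γ * vst s')) = _
  have inner : ∀ a, (∑ s', P s a s' * (r s a s' + γ * vst s'))
      = r s a s0 + γ * ∑ s', P s a s' * vst s' := by
    intro a
    have h1 : ∀ s' ∈ Finset.univ, P s a s' * (r s a s' + γ * vst s')
        = P s a s' * (r s a s0 + γ * vst s') := by
      intro s' _
      rw [hrNSI s a s' s0]
    rw [Finset.sum_congr rfl h1,
      wsum_const_add (f := fun s' => γ * vst s') (hPk s a)]
    congr 1
    rw [Finset.mul_sum]
    exact Finset.sum_congr rfl fun s' _ => by ring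
  rw [Finset.sum_congr rfl (fun a _ => by rw [inner a])]
  have h2 : ∀ a ∈ Finset.univ, π s a * (r s a s0 + γ * ∑ s', P s a s' * vst s')
      = π s a * r s a s0 + γ * (π s a * ∑ s', P s a s' * vst s') := by
    intro a _; ring
  rw [Finset.sum_congr rfl h2, Finset.sum_add_distrib, ← Finset.mul_sum]

lemma sspPrime (hne : US.Nonempty) (hcpt : IsCompact US) (hker : ∀ P ∈ US, IsKernel P)
    (hws : WeakSTractable US) (hrNSI : NextStateIndep r) (hγ0 : 0 ≤ γ) (hγ1 : γ < 1)
    {vst : S → ℝ} (hvst : Topt US r γ vst = vst)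
    (hπ : IsPolicy π) :
    ∃ Pd ∈ US, ∀ s, TpiP π r γ Pd vst s ≤ vst s := by
  classical
  obtain ⟨Bv, hBv0, hBv⟩ := exists_abs_bound vst
  set G : S → (S → A → S → ℝ) → ℝ := fun s P => ∑ a, π s a * ∑ s', P s a s' * vst s' with hG
  have hGb : ∀ s, ∀ P ∈ US, |G s P| ≤ Bv := fun s P hP =>
    abs_wsum_le (hπ s) fun a => abs_wsum_le ((hker P hP) s a) fun s' => hBv s'
  have hGbdd : ∀ s, BddBelow ((G s) '' US) :=
    fun s => bddBelow_image' (B := -Bv) fun P hP => neg_le_of_abs_le (hGb s P hP)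
  set m : S → ℝ := fun s => minOver US (G s) with hm
  set r' : S → A → S → ℝ := fun s _ _ => vst s - γ * m s with hr'
  have hr'NSI : NextStateIndep r' := fun s a s' s'' => rfl
  have hTeval : ∀ P ∈ US, ∀ s, TpiP π r' γ P vst s = (vst s - γ * m s) + γ * G s P := by
    intro P hP s
    show (∑ a, π s a * ∑ s', P s a s' * ((vst s - γ * m s) + γ * vst s'))
        = (vst s - γ * m s) + γ * G s P
    have inner : ∀ a, (∑ s', P s a s' * ((vst s - γ * m s) + γ * vst s'))
        = (vst s - γ * m s) + γ * ∑ s', P s a s' * vst s' := by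
      intro a
      rw [wsum_const_add (f := fun s' => γ * vst s') ((hker P hP) s a)]
      congr 1
      rw [Finset.mul_sum]
      exact Finset.sum_congr rfl fun s' _ => by ring
    rw [Finset.sum_congr rfl (fun a _ => by rw [inner a])]
    rw [wsum_const_add (f := fun a => γ * ∑ s', P s a s' * vst s') (hπ s)]
    congr 1
    rw [hG, Finset.mul_sum]
    exact Finset.sum_congr rfl fun a _ => by ring
  have hfix_vst : Tpi US π r' γ vst = vst := by
    funext s
    rw [tpi_apply, minOver_congr (fun P hP => hTeval P hP s), minOver_affine hne hγ0 (hGbdd s)]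
    have hms : minOver US (G s) = m s := rfl
    rw [hms]
    ring
  have hex : ∀ P : S → A → S → ℝ, ∃ wP : S → ℝ, P ∈ US → TpiP π r' γ P wP = wP := by
    intro P
    by_cases hP : P ∈ US
    · have hC := contractingWith_of_step hγ0 hγ1 (step_tpiP (r := r') hγ0 hπ (hker P hP))
      exact ⟨ContractingWith.fixedPoint _ hC, fun _ => hC.fixedPoint_isFixedPt⟩
    · exact ⟨0, fun h => absurd h hP⟩
  choose w hw using hex
  have hge : ∀ P ∈ US, ∀ s, vst s ≤ w P s := by
    intro P hP
    refine le_of_oneshot hγ0 hγ1 (step_tpi (r := r') hne hker hγ0 hπ) hfix_vst ?_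
    intro s
    calc Tpi US π r' γ (w P) s ≤ TpiP π r' γ P (w P) s :=
          tpi_le_tpiP hker hγ0 (hπ s) hP (w P)
      _ = w P s := congrFun (hw P hP) s
  set μu : S → ℝ := fun _ => ((Fintype.card S : ℝ))⁻¹ with hμu
  have hμus : μu ∈ stdSimplex ℝ S := uniform_mem_simplex
  have htr := hws π hπ r' hr'NSI γ hγ0 hγ1 w (fun P hP => hw P hP) vst hfix_vst μu hμus
  obtain ⟨P0, hP0, hminOn⟩ :=
    attains_min (r := r') hne hcpt hker hγ0 hγ1 hπ (fun P hP => hw P hP) μu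
  have hattain : (∑ s, μu s * w P0 s) = ∑ s, μu s * vst s := by
    rw [← htr]
    exact le_antisymm (le_minOver hne hminOn) (minOver_le (bddBelow_image' hminOn) hP0)
  have hμpos : ∀ s : S, (0:ℝ) < μu s := by
    intro s
    have : (0:ℝ) < (Fintype.card S : ℝ) := by exact_mod_cast Fintype.card_pos
    exact inv_pos.mpr this
  have hpw : ∀ s, w P0 s = vst s := by
    have hzero : ∑ s, μu s * (w P0 s - vst s) = 0 := by
      have h1 : ∑ s, μu s * (w P0 s - vst s)
          = (∑ s, μu s * w P0 s) - ∑ s, μu s * vst s := by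
        rw [← Finset.sum_sub_distrib]
        exact Finset.sum_congr rfl fun s _ => by ring
      rw [h1, hattain, sub_self]
    intro s
    have hterm := (Finset.sum_eq_zero_iff_of_nonneg (fun s _ =>
      mul_nonneg (hμpos s).le (by linarith [hge P0 hP0 s]))).mp hzero s (Finset.mem_univ s)
    rcases mul_eq_zero.mp hterm with h | h
    · exact absurd h (ne_of_gt (hμpos s))
    · linarith
  have hfixP0 : TpiP π r' γ P0 vst = vst := by
    have h1 := hw P0 hP0
    rwa [funext hpw] at h1
  have hGmin : ∀ s, γ * G s P0 = γ * m s := by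
    intro s
    have h2 := hTeval P0 hP0 s
    rw [congrFun hfixP0 s] at h2
    linarith
  refine ⟨P0, hP0, fun s => ?_⟩
  set s0 : S := Classical.arbitrary S with hs0
  have heval : ∀ P ∈ US, TpiP π r γ P vst s = (∑ a, π s a * r s a s0) + γ * G s P :=
    fun P hP => tpiP_NSI_eval hrNSI (hker P hP) hπ hγ0 vst s s0
  have h3 : TpiP π r γ P0 vst s = (∑ a, π s a * r s a s0) + γ * m s := by
    rw [heval P0 hP0]
    linarith [hGmin s]
  have h4 : Tpi US π r γ vst s = (∑ a, π s a * r s a s0) + γ * m s := by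
    rw [tpi_apply, minOver_congr (fun P hP => heval P hP), minOver_affine hne hγ0 (hGbdd s)]
  have h5 : Tpi US π r γ vst s ≤ vst s := by
    have := tpi_le_topt (π := π) (r := r) (s := s) hne hker hγ0 (hπ s) vst
    rw [congrFun hvst s] at this
    exact this
  rw [h3, ← h4]
  exact h5

end SSP
section Sep
set_option linter.unusedSectionVars false

open Finset

variable {S A : Type*} [Fintype S] [Fintype A] [Nonempty S] [Nonempty A]
variable {US : Set (S → A → S → ℝ)} {r : S → A → S → ℝ} {γ : ℝ}

lemma exists_Pbar (hne : US.Nonempty) (hcpt : IsCompact US) (hconv : Convex ℝ US)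
    (hker : ∀ P ∈ US, IsKernel P) (hws : WeakSTractable US) (hrNSI : NextStateIndep r)
    (hγ0 : 0 ≤ γ) (hγ1 : γ < 1) {vst : S → ℝ} (hvst : Topt US r γ vst = vst) :
    ∃ Pbar ∈ US, ∀ s a, (∑ s', Pbar s a s' * (r s a s' + γ * vst s')) ≤ vst s := by
  classical
  by_contra hcon
  push_neg at hcon
  set Φ : (S → A → S → ℝ) → ((S × A) → ℝ) :=
    fun P i => (∑ s', P i.1 i.2 s' * (r i.1 i.2 s' + γ * vst s')) - vst i.1 with hΦ
  have hΦcont : Continuous Φ := by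
    refine continuous_pi fun i => Continuous.sub ?_ continuous_const
    refine continuous_finset_sum _ fun s' _ => Continuous.mul ?_ continuous_const
    exact (continuous_apply s').comp ((continuous_apply i.2).comp (continuous_apply i.1))
  set Gimg : Set ((S × A) → ℝ) := Φ '' US with hGimg
  set O : Set ((S × A) → ℝ) := {x | ∀ i, x i ≤ 0} with hO
  have hdisj : Disjoint Gimg O := by
    rw [Set.disjoint_left]
    rintro x ⟨P, hP, rfl⟩ hxO
    obtain ⟨s, a, hsa⟩ := hcon P hP
    have := hxO (s, a)
    simp only [hΦ] at this
    linarith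
  have hconvG : Convex ℝ Gimg := by
    rintro x ⟨P, hP, rfl⟩ y ⟨Q, hQ, rfl⟩ a b ha hb hab
    refine ⟨a • P + b • Q, hconv hP hQ ha hb hab, ?_⟩
    funext i
    simp only [hΦ, Pi.add_apply, Pi.smul_apply, smul_eq_mul]
    have hdist : ∀ s' ∈ Finset.univ,
        (a * P i.1 i.2 s' + b * Q i.1 i.2 s') * (r i.1 i.2 s' + γ * vst s')
        = a * (P i.1 i.2 s' * (r i.1 i.2 s' + γ * vst s'))
          + b * (Q i.1 i.2 s' * (r i.1 i.2 s' + γ * vst s')) := by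
      intro s' _; ring
    rw [Finset.sum_congr rfl hdist, Finset.sum_add_distrib, ← Finset.mul_sum, ← Finset.mul_sum]
    linear_combination vst i.1 * hab
  have hcptG : IsCompact Gimg := hcpt.image hΦcont
  have hOclosed : IsClosed O := by
    have : O = ⋂ i, {x : (S × A) → ℝ | x i ≤ 0} := by
      ext x
      simp [hO, Set.mem_iInter]
    rw [this]
    exact isClosed_iInter fun i => isClosed_le (continuous_apply i) continuous_const
  have hOconv : Convex ℝ O := by
    intro x hx y hy a b ha hb hab
    intro i
    simp only [Pi.add_apply, Pi.smul_apply, smul_eq_mul]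
    have h1 := hx i
    have h2 := hy i
    nlinarith
  obtain ⟨f, u, v, hfG, huv, hfO⟩ :=
    geometric_hahn_banach_compact_closed hconvG hcptG hOconv hOclosed hdisj
  have hv0 : v < 0 := by
    have h0 : (0 : (S × A) → ℝ) ∈ O := fun i => le_refl 0
    have := hfO 0 h0
    rw [map_zero] at this
    linarith
  set c : (S × A) → ℝ := fun i => f ((Pi.single i 1 : (S × A) → ℝ)) with hc
  have hrep : ∀ x : (S × A) → ℝ, f x = ∑ i, x i * c i := by
    intro x
    have hx : x = ∑ i, x i • (Pi.single i 1 : (S × A) → ℝ) := by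
      funext j
      rw [Finset.sum_apply]
      simp [Pi.single_apply, mul_ite]
    calc f x = f (∑ i, x i • (Pi.single i 1 : (S × A) → ℝ)) := by rw [← hx]
      _ = ∑ i, x i • f ((Pi.single i 1 : (S × A) → ℝ)) := by
          rw [map_sum]
          exact Finset.sum_congr rfl fun i _ => by rw [map_smul]
      _ = ∑ i, x i * c i := by simp [hc, smul_eq_mul]
  set η : (S × A) → ℝ := fun i => -c i with hη
  have hη0 : ∀ i, 0 ≤ η i := by
    intro i
    by_contra hneg
    push_neg at hneg
    have hci : 0 < c i := by simp only [hη] at hneg; linarith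
    set t : ℝ := (|v| + 1) / c i with ht
    have ht0 : 0 ≤ t := div_nonneg (by positivity) hci.le
    have hyO : (-t) • (Pi.single i 1 : (S × A) → ℝ) ∈ O := by
      intro j
      simp only [Pi.smul_apply, smul_eq_mul]
      have : (0:ℝ) ≤ (Pi.single i 1 : (S × A) → ℝ) j := by
        rcases eq_or_ne i j with h | h
        · subst h; simp
        · simp [Pi.single_apply, h]
      nlinarith
    have := hfO _ hyO
    rw [map_smul] at this
    have hfy : f ((Pi.single i 1 : (S × A) → ℝ)) = c i := rfl
    rw [smul_eq_mul, hfy] at this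
    have h5 : v < -t * c i := this
    rw [ht] at h5
    have heq : -((|v| + 1) / c i) * c i = -(|v| + 1) := by
      field_simp
    rw [heq] at h5
    have hv : -|v| ≤ v := neg_abs_le v
    linarith
  have hgap : ∀ P ∈ US, 0 < ∑ i, η i * Φ P i := by
    intro P hP
    have h1 := hfG (Φ P) ⟨P, hP, rfl⟩
    have h2 : f (Φ P) = ∑ i, Φ P i * c i := hrep (Φ P)
    have h3 : ∑ i, η i * Φ P i = -(∑ i, Φ P i * c i) := by
      rw [← Finset.sum_neg_distrib]
      exact Finset.sum_congr rfl fun i _ => by simp [hη]; ring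
    rw [h3, ← h2]
    linarith
  -- build the policy
  set lam : S → ℝ := fun s => ∑ a, η (s, a) with hlam
  have hlam0 : ∀ s, 0 ≤ lam s := fun s => Finset.sum_nonneg fun a _ => hη0 (s, a)
  set πc : S → A → ℝ := fun s a =>
    if 0 < lam s then η (s, a) / lam s else ((Fintype.card A : ℝ))⁻¹ with hπc
  have hπcpol : IsPolicy πc := by
    intro s
    by_cases hs : 0 < lam s
    · constructor
      · intro a
        simp only [hπc, if_pos hs]
        exact div_nonneg (hη0 (s, a)) (hlam0 s)
      · simp only [hπc, if_pos hs]
        rw [← Finset.sum_div]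
        have hls : (∑ a, η (s, a)) = lam s := rfl
        rw [hls, div_self (ne_of_gt hs)]
    · constructor
      · intro a
        simp only [hπc, if_neg hs]
        positivity
      · simp only [hπc, if_neg hs]
        rw [Finset.sum_const, Finset.card_univ, nsmul_eq_mul, mul_inv_cancel₀]
        exact_mod_cast Fintype.card_ne_zero
  obtain ⟨Pd, hPd, hPdle⟩ := sspPrime hne hcpt hker hws hrNSI hγ0 hγ1 hvst hπcpol
  have hcontr : (∑ i, η i * Φ Pd i) ≤ 0 := by
    rw [Fintype.sum_prod_type]
    refine Finset.sum_nonpos ?_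
    intro s _
    by_cases hs : 0 < lam s
    · have hsum_eq : ∑ a, η (s, a) * Φ Pd (s, a)
          = lam s * ∑ a, πc s a * Φ Pd (s, a) := by
        rw [Finset.mul_sum]
        refine Finset.sum_congr rfl fun a _ => ?_
        simp only [hπc, if_pos hs]
        field_simp
      rw [hsum_eq]
      refine mul_nonpos_of_nonneg_of_nonpos (hlam0 s) ?_
      have hval : ∑ a, πc s a * Φ Pd (s, a)
          = TpiP πc r γ Pd vst s - vst s := by
        have : ∀ a ∈ Finset.univ, πc s a * Φ Pd (s, a)
            = πc s a * ((∑ s', Pd s a s' * (r s a s' + γ * vst s')) + -(vst s)) := by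
          intro a _
          simp only [hΦ]
          ring
        rw [Finset.sum_congr rfl this,
          wsum_add_const (f := fun a => ∑ s', Pd s a s' * (r s a s' + γ * vst s'))
            (hπcpol s)]
        rfl
      rw [hval]
      have := hPdle s
      linarith
    · have hlz : lam s = 0 := le_antisymm (not_lt.mp hs) (hlam0 s)
      have hzz : ∀ a ∈ Finset.univ, η (s, a) = 0 := by
        intro a _
        exact (Finset.sum_eq_zero_iff_of_nonneg (fun a _ => hη0 (s, a))).mp hlz a (Finset.mem_univ a)
      refine le_of_eq ?_
      refine Finset.sum_eq_zero fun a _ => ?_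
      rw [hzz a (Finset.mem_univ a), zero_mul]
  exact absurd hcontr (not_le.mpr (hgap Pd hPd))

end Sep
section PiStar
set_option linter.unusedSectionVars false

open Finset

variable {S A : Type*} [Fintype S] [Fintype A] [Nonempty S] [Nonempty A]
variable {US : Set (S → A → S → ℝ)} {r : S → A → S → ℝ} {γ : ℝ}

lemma exists_pistar (hne : US.Nonempty) (hker : ∀ P ∈ US, IsKernel P) (hγ0 : 0 ≤ γ)
    (vst : S → ℝ) :
    ∃ πs : S → A → ℝ, IsPolicy πs ∧ ∀ s, ∀ q ∈ stdSimplex ℝ A,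
      minOver US (fun P => TpiP (fun _ => q) r γ P vst s)
        ≤ minOver US (fun P => TpiP (fun _ => πs s) r γ P vst s) := by
  classical
  obtain ⟨R0, hR0, hR'⟩ := exists_abs_bound (fun t : S × A × S => r t.1 t.2.1 t.2.2)
  have hRb : ∀ s a s', |r s a s'| ≤ R0 := fun s a s' => hR' (s, a, s')
  obtain ⟨Bv, hBv0, hBv⟩ := exists_abs_bound vst
  set W : ℝ := R0 + γ * Bv with hW
  have hW0 : 0 ≤ W := by positivity
  have hach : ∀ s : S, ∃ p ∈ stdSimplex ℝ A, ∀ q ∈ stdSimplex ℝ A,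
      minOver US (fun P => TpiP (fun _ => q) r γ P vst s)
        ≤ minOver US (fun P => TpiP (fun _ => p) r γ P vst s) := by
    intro s
    set φ : (A → ℝ) → ℝ := fun p => minOver US (fun P => TpiP (fun _ => p) r γ P vst s) with hφ
    have hIa : ∀ P ∈ US, ∀ a, |∑ s', P s a s' * (r s a s' + γ * vst s')| ≤ W := by
      intro P hP a
      refine abs_wsum_le ((hker P hP) s a) fun s' => ?_
      have h2 : |γ * vst s'| ≤ γ * Bv := by
        rw [abs_mul, abs_of_nonneg hγ0]
        exact mul_le_mul_of_nonneg_left (hBv s') hγ0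
      calc |r s a s' + γ * vst s'| ≤ |r s a s'| + |γ * vst s'| := abs_add_le _ _
        _ ≤ W := add_le_add (hRb s a s') h2
    have hdiff : ∀ p q : A → ℝ, ∀ P ∈ US,
        TpiP (fun _ => p) r γ P vst s ≤ TpiP (fun _ => q) r γ P vst s
          + (∑ a, |p a - q a|) * W := by
      intro p q P hP
      have e1 : TpiP (fun _ => p) r γ P vst s - TpiP (fun _ => q) r γ P vst s
          = ∑ a, (p a - q a) * ∑ s', P s a s' * (r s a s' + γ * vst s') := by
        show (∑ a, p a * ∑ s', P s a s' * (r s a s' + γ * vst s'))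
            - (∑ a, q a * ∑ s', P s a s' * (r s a s' + γ * vst s')) = _
        rw [← Finset.sum_sub_distrib]
        exact Finset.sum_congr rfl fun a _ => by ring
      have e2 : (∑ a, (p a - q a) * ∑ s', P s a s' * (r s a s' + γ * vst s'))
          ≤ (∑ a, |p a - q a|) * W := by
        rw [Finset.sum_mul]
        refine Finset.sum_le_sum fun a _ => ?_
        calc (p a - q a) * ∑ s', P s a s' * (r s a s' + γ * vst s')
            ≤ |(p a - q a) * ∑ s', P s a s' * (r s a s' + γ * vst s')| := le_abs_self _
          _ = |p a - q a| * |∑ s', P s a s' * (r s a s' + γ * vst s')| := abs_mul _ _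
          _ ≤ |p a - q a| * W := mul_le_mul_of_nonneg_left (hIa P hP a) (abs_nonneg _)
      linarith
    have hbddq : ∀ q ∈ stdSimplex ℝ A,
        BddBelow ((fun P => TpiP (fun _ => q) r γ P vst s) '' US) := by
      intro q hq
      exact bddBelow_image' (B := -W) fun P hP =>
        neg_le_of_abs_le (tpiP_abs_le hγ0 hq (hker P hP) hRb hBv)
    have hcont : ContinuousOn φ (stdSimplex ℝ A) := by
      refine continuousOn_of_dominated fun q hq => ?_
      refine ⟨fun p => (∑ a, |p a - q a|) * W, ?_, by simp, ?_⟩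
      · exact (continuous_finset_sum _ fun a _ =>
          ((continuous_apply a).sub continuous_const).abs).mul continuous_const
      · intro p hp
        dsimp only
        rw [abs_le]
        constructor
        · have h1 : φ q ≤ φ p + (∑ a, |q a - p a|) * W :=
            minOver_le_minOver_add hne (hbddq q hq) fun P hP => hdiff q p P hP
          have h2 : (∑ a, |q a - p a|) = ∑ a, |p a - q a| :=
            Finset.sum_congr rfl fun a _ => abs_sub_comm _ _
          rw [h2] at h1
          linarith
        · have h1 : φ p ≤ φ q + (∑ a, |p a - q a|) * W :=
            minOver_le_minOver_add hne (hbddq p hp) fun P hP => hdiff p q P hP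
          linarith
    obtain ⟨p, hp, hmax⟩ := (isCompact_stdSimplex ℝ A).exists_isMaxOn
      ⟨_, ite_eq_mem_stdSimplex ℝ (Classical.arbitrary A)⟩ hcont
    exact ⟨p, hp, fun q hq => hmax hq⟩
  choose p hp1 hp2 using hach
  exact ⟨fun s => p s, hp1, hp2⟩

end PiStar
theorem stmt11 {S A : Type*} [Fintype S] [Fintype A] [Nonempty S] [Nonempty A]
    (US : Set (S → A → S → ℝ)) (hne : US.Nonempty) (hker : ∀ P ∈ US, IsKernel P)
    (hcpt : IsCompact US) (hconv : Convex ℝ US) (hws : WeakSTractable US)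
    (r : S → A → S → ℝ) (hr : NextStateIndep r) (γ : ℝ) (hγ0 : 0 ≤ γ) (hγ1 : γ < 1)
    (v : (S → A → ℝ) → (S → A → S → ℝ) → S → ℝ)
    (hv : ∀ π : S → A → ℝ, IsPolicy π → ∀ P ∈ US, TpiP π r γ P (v π P) = v π P) :
    (∀ μ ∈ stdSimplex ℝ S,
      maxOver {π : List (S × A) → S → A → ℝ | IsHPolicy π}
          (fun π => minOver US (fun P => ∑ s, μ s * vHH π (fun _ => P) r γ s)) =
        maxOver {π : S → A → ℝ | IsPolicy π}
          (fun π => minOver US (fun P => ∑ s, μ s * v π P s))) ∧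
      ∃ πstar : S → A → ℝ, IsPolicy πstar ∧
        ∀ μ ∈ stdSimplex ℝ S,
          minOver US (fun P => ∑ s, μ s * v πstar P s) =
            maxOver {π : List (S × A) → S → A → ℝ | IsHPolicy π}
              (fun π => minOver US (fun P => ∑ s, μ s * vHH π (fun _ => P) r γ s)) := by
  classical
  obtain ⟨R0, hR0, hR'⟩ := exists_abs_bound (fun t : S × A × S => r t.1 t.2.1 t.2.2)
  have hRb : ∀ s a s', |r s a s'| ≤ R0 := fun s a s' => hR' (s, a, s')
  -- the robust optimal value function
  have hCopt := contractingWith_of_step hγ0 hγ1 (step_topt (US := US) (r := r) hne hker hγ0)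
  set vstar : S → ℝ := ContractingWith.fixedPoint (Topt US r γ) hCopt with hvstardef
  have hvst : Topt US r γ vstar = vstar := hCopt.fixedPoint_isFixedPt
  obtain ⟨Bv, hBv0, hBv⟩ := exists_abs_bound vstar
  -- greedy stationary policy
  obtain ⟨πstar, hπspol, hπsmax⟩ := exists_pistar (US := US) (r := r) (γ := γ) hne hker hγ0 vstar
  have hfixπs : Tpi US πstar r γ vstar = vstar := by
    funext s
    have h1 : Tpi US πstar r γ vstar s
        = minOver US (fun P => TpiP (fun _ => πstar s) r γ P vstar s) := rfl
    have h2 : Topt US r γ vstar s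
        = maxOver (stdSimplex ℝ A)
            (fun p => minOver US (fun P => TpiP (fun _ => p) r γ P vstar s)) := rfl
    rw [show vstar s = Topt US r γ vstar s from (congrFun hvst s).symm, h1, h2]
    refine le_antisymm ?_ ?_
    · have h := le_maxOver
        (f := fun p => minOver US fun P => TpiP (fun _ => p) r γ P vstar s)
        (bddAbove_image' (B := R0 + γ * Bv) fun p hp =>
          le_of_abs_le (abs_minOver_tpiP_le hne hker hγ0 hp hRb hBv)) (hπspol s)
      exact h
    · exact maxOver_le ⟨_, ite_eq_mem_stdSimplex ℝ (Classical.arbitrary A)⟩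
        (fun q hq => hπsmax s q hq)
  -- stationary values are at most the robust optimal value
  have hstatval : ∀ π : S → A → ℝ, IsPolicy π → ∀ μ ∈ stdSimplex ℝ S,
      minOver US (fun P => ∑ s, μ s * v π P s) ≤ ∑ s, μ s * vstar s := by
    intro π hπ μ hμ
    have hC := contractingWith_of_step hγ0 hγ1
      (step_tpi (US := US) (r := r) hne hker hγ0 hπ)
    set u : S → ℝ := ContractingWith.fixedPoint (Tpi US π r γ) hC with hudef
    have hufix : Tpi US π r γ u = u := hC.fixedPoint_isFixedPt
    have htr := hws π hπ r hr γ hγ0 hγ1 (v π) (hv π hπ) u hufix μ hμ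
    rw [htr]
    have hle : ∀ s, u s ≤ vstar s := by
      refine le_of_oneshot hγ0 hγ1 (step_tpi (r := r) hne hker hγ0 hπ) hufix ?_
      intro s
      have h := tpi_le_topt (US := US) (π := π) (r := r) (s := s) hne hker hγ0 (hπ s) vstar
      rwa [congrFun hvst s] at h
    exact Finset.sum_le_sum fun s _ => mul_le_mul_of_nonneg_left (hle s) (hμ.1 s)
  have hπstarval : ∀ μ ∈ stdSimplex ℝ S,
      minOver US (fun P => ∑ s, μ s * v πstar P s) = ∑ s, μ s * vstar s :=
    fun μ hμ => hws πstar hπspol r hr γ hγ0 hγ1 (v πstar) (hv πstar hπspol) vstar hfixπs μ hμ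
  -- uniformly worst-case static kernel
  obtain ⟨Pbar, hPbar, hPbarE⟩ := exists_Pbar hne hcpt hconv hker hws hr hγ0 hγ1 hvst
  -- upper bound for history-dependent policies
  have hHistUB : ∀ πh : List (S × A) → S → A → ℝ, IsHPolicy πh → ∀ μ ∈ stdSimplex ℝ S,
      minOver US (fun P => ∑ s, μ s * vHH πh (fun _ => P) r γ s) ≤ ∑ s, μ s * vstar s := by
    intro πh hπh μ hμ
    have hbb : BddBelow ((fun P => ∑ s, μ s * vHH πh (fun _ => P) r γ s) '' US) :=
      bddBelow_image' (B := -(R0 * (1 - γ)⁻¹)) fun P hP =>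
        const_le_wsum hμ fun s =>
          neg_le_of_abs_le (vHH_abs_le hγ0 hγ1 hπh (hker P hP) hRb s)
    refine (minOver_le hbb hPbar).trans ?_
    refine Finset.sum_le_sum fun s _ => mul_le_mul_of_nonneg_left ?_ (hμ.1 s)
    exact vHH_le_of_E hγ0 hγ1 hπh (hker Pbar hPbar) hPbarE s
  -- the lifted greedy policy achieves the robust optimal value
  have hLift : ∀ P ∈ US, ∀ s : S, vHH (fun _ => πstar) (fun _ => P) r γ s = v πstar P s :=
    fun P hP s => vHH_lift_eq hγ0 hγ1 hπspol (hker P hP) (hv πstar hπspol P hP) s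
  have hLiftVal : ∀ μ ∈ stdSimplex ℝ S,
      minOver US (fun P => ∑ s, μ s * vHH (fun _ => πstar) (fun _ => P) r γ s)
        = ∑ s, μ s * vstar s := by
    intro μ hμ
    rw [minOver_congr (fun P hP => Finset.sum_congr rfl fun s _ => by rw [hLift P hP s])]
    exact hπstarval μ hμ
  have hHistEq : ∀ μ ∈ stdSimplex ℝ S,
      maxOver {π : List (S × A) → S → A → ℝ | IsHPolicy π}
          (fun π => minOver US (fun P => ∑ s, μ s * vHH π (fun _ => P) r γ s))
        = ∑ s, μ s * vstar s := by
    intro μ hμ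
    refine le_antisymm ?_ ?_
    · exact maxOver_le ⟨fun _ => πstar, fun _ s => hπspol s⟩
        (fun πh hπh => hHistUB πh hπh μ hμ)
    · have hmem : (fun _ : List (S × A) => πstar)
          ∈ {π : List (S × A) → S → A → ℝ | IsHPolicy π} := fun _ s => hπspol s
      have h := le_maxOver (bddAbove_image' (B := ∑ s, μ s * vstar s)
        (fun πh hπh => hHistUB πh hπh μ hμ)) hmem
      exact le_of_eq_of_le (hLiftVal μ hμ).symm h
  have hStatEq : ∀ μ ∈ stdSimplex ℝ S,
      maxOver {π : S → A → ℝ | IsPolicy π}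
          (fun π => minOver US (fun P => ∑ s, μ s * v π P s)) = ∑ s, μ s * vstar s := by
    intro μ hμ
    refine le_antisymm ?_ ?_
    · exact maxOver_le ⟨πstar, hπspol⟩ (fun π hπ => hstatval π hπ μ hμ)
    · have h := le_maxOver (bddAbove_image' (B := ∑ s, μ s * vstar s)
        (fun π hπ => hstatval π hπ μ hμ)) (show πstar ∈ {π : S → A → ℝ | IsPolicy π} from hπspol)
      exact le_of_eq_of_le (hπstarval μ hμ).symm h
  refine ⟨fun μ hμ => (hHistEq μ hμ).trans (hStatEq μ hμ).symm,
    πstar, hπspol, fun μ hμ => (hπstarval μ hμ).trans (hHistEq μ hμ).symm⟩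

end RMDP
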